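/- There exists a positive absolute constant c₀ such that the following holds. Suppose Z̃ = [X̃; Ỹ] ∈ ℝ^{(n₁+n₂)×r} is aligned with Z⋆, i.e., the identity matrix I_r is a minimizer of ‖X̃P − X⋆‖_F² + ‖ỸP⁻ᵀ − Y⋆‖_F² over invertible P ∈ ℝ^{r×r}. Set Ẽ_x = X̃ − X⋆ and Ẽ_y = Ỹ − Y⋆, and assume ‖Ẽ_x‖_F² + ‖Ẽ_y‖_F² ≤ c₀² σ_min/κ³. Let Λ ∈ ℝ^{r×r} be invertible with ‖Λ − I_r‖ ≤ 1/(180√κ) and ‖Λ⁻¹ − I_r‖ ≤ 1/(180√κ). Then ⟨Ẽ_x, (X̃Ỹᵀ − M⋆)ỸΛ⟩ + ⟨Ẽ_y, (X̃Ỹᵀ − M⋆)ᵀX̃Λ⁻¹⟩ ≥ ¾·(‖Ỹ Ẽ_xᵀ‖_F² + ‖X̃ Ẽ_yᵀ‖_F²) − (σ_min/7)·(‖Ẽ_x‖_F² + ‖Ẽ_y‖_F²). -/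

import Mathlib

open Matrix BigOperators Topology

/-- Frobenius norm of a real matrix. -/
noncomputable def frobNorm {m n : ℕ} (A : Matrix (Fin m) (Fin n) ℝ) : ℝ :=
  Real.sqrt (∑ i, ∑ j, (A i j) ^ 2)

/-- Spectral norm (largest singular value) of a real matrix. -/
noncomputable def specNorm {m n : ℕ} (A : Matrix (Fin m) (Fin n) ℝ) : ℝ :=
  ‖LinearMap.toContinuousLinearMap (Matrix.toEuclideanLin A)‖

/-- Smallest singular value of a matrix with `r` columns (the `r`-th largest singular value). -/
noncomputable def sigmaMinCol {m r : ℕ} (A : Matrix (Fin m) (Fin r) ℝ) : ℝ :=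
  sInf { s | ∃ v : EuclideanSpace ℝ (Fin r), ‖v‖ = 1 ∧ s = ‖Matrix.toEuclideanLin A v‖ }

/-- Matrix inner product `⟨A, B⟩ = Tr(Bᵀ A)`. -/
noncomputable def matInner {m n : ℕ} (A B : Matrix (Fin m) (Fin n) ℝ) : ℝ :=
  Matrix.trace (Bᵀ * A)

/-- Euclidean norm on `ℝ^m`. -/
noncomputable def vec2Norm {m : ℕ} (y : Fin m → ℝ) : ℝ :=
  Real.sqrt (∑ i, (y i) ^ 2)

/-- The sensing operator `𝒜(M) = (⟨A_i, M⟩)_{i=1..m}`. -/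
noncomputable def senseOp {n₁ n₂ m : ℕ} (As : Fin m → Matrix (Fin n₁) (Fin n₂) ℝ)
    (M : Matrix (Fin n₁) (Fin n₂) ℝ) : Fin m → ℝ :=
  fun i => matInner (As i) M

/-- The adjoint operator `𝒜*(y) = ∑ i, y i • A i`. -/
noncomputable def senseAdj {n₁ n₂ m : ℕ} (As : Fin m → Matrix (Fin n₁) (Fin n₂) ℝ)
    (y : Fin m → ℝ) : Matrix (Fin n₁) (Fin n₂) ℝ :=
  ∑ i, y i • As i

/-- Rank-`k` restricted isometry property with constant `δ`. -/
def HasRIP {n₁ n₂ m : ℕ} (As : Fin m → Matrix (Fin n₁) (Fin n₂) ℝ) (k : ℕ) (δ : ℝ) : Prop :=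
  0 ≤ δ ∧ δ < 1 ∧
  ∀ M : Matrix (Fin n₁) (Fin n₂) ℝ, M.rank ≤ k →
    (1 - δ) * (frobNorm M) ^ 2 ≤ (vec2Norm (senseOp As M)) ^ 2 ∧
    (vec2Norm (senseOp As M)) ^ 2 ≤ (1 + δ) * (frobNorm M) ^ 2

/-- dist(Z, Z⋆): infimum over invertible `P` of
`sqrt(‖XP − X⋆‖_F² + ‖YP⁻ᵀ − Y⋆‖_F²)`. -/
noncomputable def distZ {n₁ n₂ r : ℕ} (X Xs : Matrix (Fin n₁) (Fin r) ℝ)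
    (Y Ys : Matrix (Fin n₂) (Fin r) ℝ) : ℝ :=
  sInf { v | ∃ P : Matrix (Fin r) (Fin r) ℝ, IsUnit P ∧
    v = Real.sqrt ((frobNorm (X * P - Xs)) ^ 2 + (frobNorm (Y * (P⁻¹)ᵀ - Ys)) ^ 2) }

noncomputable def mvec {m n : ℕ} (A : Matrix (Fin m) (Fin n) ℝ) :
    EuclideanSpace ℝ (Fin m × Fin n) := (WithLp.equiv 2 _).symm (fun p => A p.1 p.2)

lemma mvec_add {m n : ℕ} (A B : Matrix (Fin m) (Fin n) ℝ) : mvec (A + B) = mvec A + mvec B := rfl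
lemma mvec_sub {m n : ℕ} (A B : Matrix (Fin m) (Fin n) ℝ) : mvec (A - B) = mvec A - mvec B := rfl
lemma mvec_smul {m n : ℕ} (t : ℝ) (A : Matrix (Fin m) (Fin n) ℝ) : mvec (t • A) = t • mvec A := rfl

lemma frob_eq_norm {m n : ℕ} (A : Matrix (Fin m) (Fin n) ℝ) : frobNorm A = ‖mvec A‖ := by
  rw [EuclideanSpace.norm_eq, frobNorm]
  congr 1
  rw [Fintype.sum_prod_type]
  simp [mvec, sq_abs]

lemma matInner_eq_inner {m n : ℕ} (A B : Matrix (Fin m) (Fin n) ℝ) :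
    matInner A B = inner ℝ (mvec A) (mvec B) := by
  rw [matInner, Matrix.trace]
  simp only [PiLp.inner_apply, RCLike.inner_apply, starRingEnd_apply, star_trivial]
  rw [Fintype.sum_prod_type]
  simp [Matrix.mul_apply, Matrix.diag, mvec, mul_comm]
  exact Finset.sum_comm

lemma frob_nonneg {m n : ℕ} (A : Matrix (Fin m) (Fin n) ℝ) : 0 ≤ frobNorm A :=
  Real.sqrt_nonneg _

lemma matInner_self {m n : ℕ} (A : Matrix (Fin m) (Fin n) ℝ) :
    matInner A A = frobNorm A ^ 2 := by
  rw [matInner_eq_inner, frob_eq_norm, real_inner_self_eq_norm_sq]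

lemma abs_matInner_le {m n : ℕ} (A B : Matrix (Fin m) (Fin n) ℝ) :
    |matInner A B| ≤ frobNorm A * frobNorm B := by
  rw [matInner_eq_inner, frob_eq_norm, frob_eq_norm]
  exact abs_real_inner_le_norm _ _

lemma frob_sub_le {m n : ℕ} (A B : Matrix (Fin m) (Fin n) ℝ) :
    frobNorm (A - B) ≤ frobNorm A + frobNorm B := by
  rw [frob_eq_norm, frob_eq_norm, frob_eq_norm, mvec_sub]; exact norm_sub_le _ _

lemma frob_transpose {m n : ℕ} (A : Matrix (Fin m) (Fin n) ℝ) :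
    frobNorm Aᵀ = frobNorm A := by
  rw [frobNorm, frobNorm]
  congr 1
  exact Finset.sum_comm

noncomputable def evec {n : ℕ} (v : Fin n → ℝ) : EuclideanSpace ℝ (Fin n) :=
  (WithLp.equiv 2 _).symm v

lemma evec_norm_sq {n : ℕ} (v : Fin n → ℝ) : ‖evec v‖ ^ 2 = ∑ i, (v i) ^ 2 := by
  rw [EuclideanSpace.norm_eq, Real.sq_sqrt (by positivity)]
  simp [evec, sq_abs]

lemma mulVec_norm_le {m n : ℕ} (A : Matrix (Fin m) (Fin n) ℝ) (v : Fin n → ℝ) :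
    ‖evec (A *ᵥ v)‖ ≤ specNorm A * ‖evec v‖ := by
  have := (LinearMap.toContinuousLinearMap (Matrix.toEuclideanLin A)).le_opNorm (evec v)
  simpa [evec, specNorm] using this

lemma specNorm_nonneg {m n : ℕ} (A : Matrix (Fin m) (Fin n) ℝ) : 0 ≤ specNorm A :=
  norm_nonneg _

lemma specNorm_le_bound {m n : ℕ} (A : Matrix (Fin m) (Fin n) ℝ) {c : ℝ} (hc : 0 ≤ c)
    (h : ∀ v : Fin n → ℝ, ‖evec (A *ᵥ v)‖ ≤ c * ‖evec v‖) : specNorm A ≤ c := by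
  apply ContinuousLinearMap.opNorm_le_bound _ hc
  intro x
  simpa [evec, Matrix.toEuclideanLin_apply] using h ((WithLp.equiv 2 _) x)

lemma sqle {x y : ℝ} (hx : 0 ≤ x) (hy : 0 ≤ y) (h : x ^ 2 ≤ y ^ 2) : x ≤ y := by
  nlinarith

lemma frob_sq_cols {m n : ℕ} (A : Matrix (Fin m) (Fin n) ℝ) :
    frobNorm A ^ 2 = ∑ j, ‖evec (fun i => A i j)‖ ^ 2 := by
  rw [frobNorm, Real.sq_sqrt (by positivity)]
  simp_rw [evec_norm_sq]
  exact Finset.sum_comm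

lemma frob_mul_le {m n k : ℕ} (A : Matrix (Fin m) (Fin n) ℝ) (B : Matrix (Fin n) (Fin k) ℝ) :
    frobNorm (A * B) ≤ specNorm A * frobNorm B := by
  apply sqle (frob_nonneg _) (mul_nonneg (specNorm_nonneg _) (frob_nonneg _))
  rw [mul_pow, frob_sq_cols, frob_sq_cols B]
  rw [Finset.mul_sum]
  apply Finset.sum_le_sum
  intro j _
  have hc : (fun i => (A * B) i j) = A *ᵥ (fun i => B i j) := by
    funext i; simp [Matrix.mul_apply, Matrix.mulVec, dotProduct]
  rw [hc, ← mul_pow]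
  have := mulVec_norm_le A (fun i => B i j)
  have h0 : (0:ℝ) ≤ ‖evec (A *ᵥ fun i => B i j)‖ := norm_nonneg _
  nlinarith [norm_nonneg (evec (fun i => B i j)), specNorm_nonneg A]

lemma spec_le_frob {m n : ℕ} (A : Matrix (Fin m) (Fin n) ℝ) : specNorm A ≤ frobNorm A := by
  apply specNorm_le_bound _ (frob_nonneg _)
  intro v
  apply sqle (norm_nonneg _) (mul_nonneg (frob_nonneg _) (norm_nonneg _))
  rw [evec_norm_sq, mul_pow, evec_norm_sq, frobNorm,
    Real.sq_sqrt (by positivity : (0:ℝ) ≤ ∑ i, ∑ j, A i j ^2)]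
  rw [Finset.sum_mul]
  apply Finset.sum_le_sum
  intro i _
  have h := Finset.sum_mul_sq_le_sq_mul_sq Finset.univ (fun j => A i j) v
  have h2 : (A *ᵥ v) i = ∑ j, A i j * v j := by
    simp [Matrix.mulVec, dotProduct]
  rw [h2]
  simpa using h

lemma specNorm_add_le {m n : ℕ} (A B : Matrix (Fin m) (Fin n) ℝ) :
    specNorm (A + B) ≤ specNorm A + specNorm B := by
  simp only [specNorm, map_add]
  exact norm_add_le _ _

lemma matInner_comm {m n : ℕ} (A B : Matrix (Fin m) (Fin n) ℝ) : matInner A B = matInner B A := by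
  rw [matInner, matInner, ← Matrix.trace_transpose, Matrix.transpose_mul, Matrix.transpose_transpose]

lemma matInner_shift {m n k : ℕ} (A : Matrix (Fin m) (Fin n) ℝ)
    (B : Matrix (Fin m) (Fin k) ℝ) (C : Matrix (Fin k) (Fin n) ℝ) :
    matInner A (B * C) = matInner (A * Cᵀ) B := by
  rw [matInner, matInner, Matrix.transpose_mul]
  rw [Matrix.mul_assoc, Matrix.trace_mul_comm, Matrix.mul_assoc]

lemma matInner_add_left {m n : ℕ} (A B C : Matrix (Fin m) (Fin n) ℝ) :
    matInner (A + B) C = matInner A C + matInner B C := by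
  rw [matInner, matInner, matInner, Matrix.mul_add, Matrix.trace_add]

lemma matInner_sub_right {m n : ℕ} (A B C : Matrix (Fin m) (Fin n) ℝ) :
    matInner A (B - C) = matInner A B - matInner A C := by
  rw [matInner, matInner, matInner, Matrix.transpose_sub, Matrix.sub_mul, Matrix.trace_sub]

lemma matInner_transpose {m n : ℕ} (A B : Matrix (Fin m) (Fin n) ℝ) :
    matInner Aᵀ Bᵀ = matInner A B := by
  rw [matInner, Matrix.transpose_transpose, Matrix.trace_mul_comm, matInner_comm, matInner]

lemma evec_inner {n : ℕ} (v w : Fin n → ℝ) :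
    inner ℝ (evec v) (evec w) = dotProduct v w := by
  simp only [PiLp.inner_apply, RCLike.inner_apply, starRingEnd_apply, star_trivial]
  simp [evec, dotProduct, mul_comm]

lemma evec_self {n : ℕ} (v : Fin n → ℝ) : dotProduct v v = ‖evec v‖ ^ 2 := by
  rw [← evec_inner, real_inner_self_eq_norm_sq]

lemma orth_mulVec_norm {n r : ℕ} (U : Matrix (Fin n) (Fin r) ℝ) (hU : Uᵀ * U = 1)
    (w : Fin r → ℝ) : ‖evec (U *ᵥ w)‖ = ‖evec w‖ := by
  have h : dotProduct (U *ᵥ w) (U *ᵥ w) = dotProduct w w := by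
    rw [Matrix.dotProduct_mulVec, ← Matrix.mulVec_transpose, Matrix.mulVec_mulVec, hU,
      Matrix.one_mulVec]
  rw [evec_self, evec_self] at h
  have := norm_nonneg (evec (U *ᵥ w)); have := norm_nonneg (evec w)
  nlinarith

lemma orthT_mulVec_norm_le {n r : ℕ} (U : Matrix (Fin n) (Fin r) ℝ) (hU : Uᵀ * U = 1)
    (v : Fin n → ℝ) : ‖evec (Uᵀ *ᵥ v)‖ ≤ ‖evec v‖ := by
  set w := Uᵀ *ᵥ v with hw
  have h : dotProduct w w = dotProduct (U *ᵥ w) v := by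
    rw [hw]
    rw [Matrix.mulVec_transpose, ← Matrix.dotProduct_mulVec]
    exact dotProduct_comm _ _
  have hcs : dotProduct (U *ᵥ w) v ≤ ‖evec (U *ᵥ w)‖ * ‖evec v‖ := by
    rw [← evec_inner]
    exact real_inner_le_norm _ _
  rw [orth_mulVec_norm U hU w] at hcs
  rw [evec_self] at h
  have h2 : ‖evec w‖ ^ 2 ≤ ‖evec w‖ * ‖evec v‖ := le_trans (le_of_eq h) hcs
  rcases eq_or_lt_of_le (norm_nonneg (evec w)) with h3 | h3
  · rw [← h3]; exact norm_nonneg _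
  · nlinarith

lemma diag_mulVec_norm_le {r : ℕ} (d : Fin r → ℝ) (σmax : ℝ) (hd : ∀ i, 0 ≤ d i)
    (hle : ∀ i, d i ≤ σmax) (hσ : 0 ≤ σmax) (v : Fin r → ℝ) :
    ‖evec (Matrix.diagonal (fun i => Real.sqrt (d i)) *ᵥ v)‖ ≤ Real.sqrt σmax * ‖evec v‖ := by
  apply sqle (norm_nonneg _) (mul_nonneg (Real.sqrt_nonneg _) (norm_nonneg _))
  rw [mul_pow, evec_norm_sq, evec_norm_sq, Real.sq_sqrt hσ, Finset.mul_sum]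
  apply Finset.sum_le_sum
  intro i _
  rw [Matrix.mulVec_diagonal, mul_pow, Real.sq_sqrt (hd i)]
  have := sq_nonneg (v i)
  nlinarith [hle i]

lemma spec_star_le {n r : ℕ} (U : Matrix (Fin n) (Fin r) ℝ) (hU : Uᵀ * U = 1)
    (d : Fin r → ℝ) (σmax : ℝ) (hd : ∀ i, 0 ≤ d i) (hle : ∀ i, d i ≤ σmax) (hσ : 0 ≤ σmax) :
    specNorm (U * Matrix.diagonal (fun i => Real.sqrt (d i))) ≤ Real.sqrt σmax := by
  apply specNorm_le_bound _ (Real.sqrt_nonneg _)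
  intro v
  rw [← Matrix.mulVec_mulVec, orth_mulVec_norm U hU]
  exact diag_mulVec_norm_le d σmax hd hle hσ v

lemma spec_starT_le {n r : ℕ} (U : Matrix (Fin n) (Fin r) ℝ) (hU : Uᵀ * U = 1)
    (d : Fin r → ℝ) (σmax : ℝ) (hd : ∀ i, 0 ≤ d i) (hle : ∀ i, d i ≤ σmax) (hσ : 0 ≤ σmax) :
    specNorm (U * Matrix.diagonal (fun i => Real.sqrt (d i)))ᵀ ≤ Real.sqrt σmax := by
  apply specNorm_le_bound _ (Real.sqrt_nonneg _)
  intro v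
  rw [Matrix.transpose_mul, Matrix.diagonal_transpose, ← Matrix.mulVec_mulVec]
  calc ‖evec (Matrix.diagonal (fun i => Real.sqrt (d i)) *ᵥ (Uᵀ *ᵥ v))‖
      ≤ Real.sqrt σmax * ‖evec (Uᵀ *ᵥ v)‖ := diag_mulVec_norm_le d σmax hd hle hσ _
    _ ≤ Real.sqrt σmax * ‖evec v‖ := by
        exact mul_le_mul_of_nonneg_left (orthT_mulVec_norm_le U hU v) (Real.sqrt_nonneg _)

lemma matInner_sum {m n : ℕ} (A B : Matrix (Fin m) (Fin n) ℝ) :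
    matInner A B = ∑ i, ∑ j, A i j * B i j := by
  rw [matInner, Matrix.trace]
  simp only [Matrix.diag, Matrix.mul_apply, Matrix.transpose_apply]
  rw [Finset.sum_comm]
  congr 1; funext i; congr 1; funext j; ring

lemma continuous_matInner_left {m n : ℕ} (C : Matrix (Fin m) (Fin n) ℝ) :
    Continuous (fun X : Matrix (Fin m) (Fin n) ℝ => matInner X C) := by
  simp only [matInner_sum]
  apply continuous_finset_sum; intro i _
  apply continuous_finset_sum; intro j _
  exact (continuous_id.matrix_elem i j).mul continuous_const

lemma continuous_frobNorm {m n : ℕ} :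
    Continuous (fun X : Matrix (Fin m) (Fin n) ℝ => frobNorm X) := by
  unfold frobNorm
  apply Real.continuous_sqrt.comp
  apply continuous_finset_sum; intro i _
  apply continuous_finset_sum; intro j _
  exact ((continuous_apply j).comp (continuous_apply i)).pow 2

lemma frob_expand {m n : ℕ} (M Z : Matrix (Fin m) (Fin n) ℝ) (t : ℝ) :
    frobNorm (M + t • Z) ^ 2 =
      frobNorm M ^ 2 + 2 * t * matInner M Z + t ^ 2 * frobNorm Z ^ 2 := by
  rw [frob_eq_norm, mvec_add, mvec_smul, norm_add_sq_real, real_inner_smul_right,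
    norm_smul, ← frob_eq_norm, ← frob_eq_norm, ← matInner_eq_inner]
  rw [mul_pow]
  simp [Real.norm_eq_abs, sq_abs]
  ring

lemma frob_eq_zero {m n : ℕ} {A : Matrix (Fin m) (Fin n) ℝ} (h : frobNorm A = 0) : A = 0 := by
  rw [frob_eq_norm, norm_eq_zero] at h
  funext i j
  have : mvec A (i, j) = 0 := by rw [h]; rfl
  exact this

lemma matInner_sub_left {m n : ℕ} (A B C : Matrix (Fin m) (Fin n) ℝ) :
    matInner (A - B) C = matInner A C - matInner B C := by
  rw [matInner, matInner, matInner, Matrix.mul_sub, Matrix.trace_sub]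

lemma frob_sq_zero {m n : ℕ} {A : Matrix (Fin m) (Fin n) ℝ} (h : frobNorm A ^ 2 = 0) :
    A = 0 := by
  apply frob_eq_zero
  exact pow_eq_zero_iff (n := 2) (by norm_num) |>.mp h

lemma align_first_order {n₁ n₂ r : ℕ} (Xt Xs : Matrix (Fin n₁) (Fin r) ℝ)
    (Yt Ys : Matrix (Fin n₂) (Fin r) ℝ)
    (halign : ∀ P : Matrix (Fin r) (Fin r) ℝ, IsUnit P →
      (frobNorm (Xt - Xs)) ^ 2 + (frobNorm (Yt - Ys)) ^ 2 ≤
        (frobNorm (Xt * P - Xs)) ^ 2 + (frobNorm (Yt * (P⁻¹)ᵀ - Ys)) ^ 2) :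
    Xtᵀ * (Xt - Xs) = (Yt - Ys)ᵀ * Yt := by
  set Ex := Xt - Xs with hEx
  set Ey := Yt - Ys with hEy
  have key : ∀ A : Matrix (Fin r) (Fin r) ℝ,
      matInner Ex (Xt * A) = matInner Ey (Yt * Aᵀ) := by
    intro A
    set invf : ℝ → Matrix (Fin r) (Fin r) ℝ := fun t => (1 + t • A)⁻¹ with hinvf
    have hcont1 : Continuous (fun t : ℝ => 1 + t • A) :=
      continuous_const.add (continuous_id.smul continuous_const)
    have hdet : ContinuousAt (fun t : ℝ => (1 + t • A).det) 0 :=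
      (hcont1.matrix_det).continuousAt
    have hdet0 : (1 + (0:ℝ) • A).det = 1 := by simp
    have hunit : ∀ᶠ t in 𝓝 (0:ℝ), IsUnit (1 + t • A) := by
      have hne : ∀ᶠ t in 𝓝 (0:ℝ), (1 + t • A).det ≠ 0 := by
        apply hdet.eventually_ne; rw [hdet0]; norm_num
      filter_upwards [hne] with t ht
      rw [Matrix.isUnit_iff_isUnit_det]
      exact isUnit_iff_ne_zero.mpr ht
    have hinv_cont : ContinuousAt invf 0 := by
      have h1 : ContinuousAt Inv.inv (1 + (0:ℝ) • A) := by
        apply continuousAt_matrix_inv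
        rw [Ring.inverse_eq_inv', hdet0]
        exact continuousAt_inv₀ one_ne_zero
      exact Filter.Tendsto.comp h1 hcont1.continuousAt
    have hinvid : ∀ t : ℝ, IsUnit (1 + t • A) → invf t = 1 - t • (A * invf t) := by
      intro t hu
      have hright : (1 + t • A) * invf t = 1 :=
        Matrix.mul_nonsing_inv _ ((Matrix.isUnit_iff_isUnit_det _).mp hu)
      have hcomm : (1 + t • A) * A = A * (1 + t • A) := by
        rw [Matrix.add_mul, Matrix.mul_add, Matrix.one_mul, Matrix.mul_one,
          Matrix.smul_mul, Matrix.mul_smul]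
      have hmul : (1 + t • A) * (1 - t • (A * invf t)) = 1 := by
        rw [Matrix.mul_sub, Matrix.mul_one, Matrix.mul_smul, ← Matrix.mul_assoc, hcomm,
          Matrix.mul_assoc, hright, Matrix.mul_one]
        rw [add_sub_cancel_right]
      exact (Matrix.inv_eq_right_inv hmul).symm ▸ rfl
    set Z : ℝ → Matrix (Fin n₂) (Fin r) ℝ := fun t => Yt * (A * invf t)ᵀ with hZ
    set G : ℝ → ℝ := fun t => 2 * matInner Ex (Xt * A) - 2 * matInner (Z t) Ey
      + t * (frobNorm (Xt * A) ^ 2 + frobNorm (Z t) ^ 2) with hG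
    have hGineq : ∀ t : ℝ, IsUnit (1 + t • A) → 0 ≤ t * G t := by
      intro t hu
      have h := halign (1 + t • A) hu
      have e1 : Xt * (1 + t • A) - Xs = Ex + t • (Xt * A) := by
        rw [Matrix.mul_add, Matrix.mul_one, Matrix.mul_smul, hEx]; abel
      have e2 : Yt * ((1 + t • A)⁻¹)ᵀ - Ys = Ey + (-t) • (Z t) := by
        have : (1 + t • A)⁻¹ = invf t := rfl
        rw [this, hinvid t hu, Matrix.transpose_sub, Matrix.transpose_one,
          Matrix.transpose_smul, Matrix.mul_sub, Matrix.mul_one, Matrix.mul_smul, hEy, hZ]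
        simp only [neg_smul]
        abel
      rw [e1, e2, frob_expand, frob_expand] at h
      rw [matInner_comm Ey (Z t)] at h
      rw [hG]
      ring_nf
      ring_nf at h
      linarith [h]
    have hZcont : ContinuousAt Z 0 := by
      have hc : Continuous (fun M : Matrix (Fin r) (Fin r) ℝ => Yt * (A * M)ᵀ) :=
        continuous_const.matrix_mul ((continuous_const.matrix_mul continuous_id).matrix_transpose)
      exact hc.continuousAt.comp hinv_cont
    have hGcont : ContinuousAt G 0 := by
      rw [hG]
      apply ContinuousAt.add
      · apply ContinuousAt.sub continuousAt_const
        exact (continuous_const.mul ((continuous_matInner_left Ey))).continuousAt.comp hZcont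
      · apply ContinuousAt.mul continuousAt_id
        apply ContinuousAt.add continuousAt_const
        exact ((continuous_frobNorm.continuousAt.comp hZcont).pow 2)
    have hG0_nonneg : 0 ≤ G 0 := by
      have hev : ∀ᶠ t in 𝓝[>] (0:ℝ), 0 ≤ G t := by
        filter_upwards [hunit.filter_mono nhdsWithin_le_nhds, self_mem_nhdsWithin] with t hu ht
        have := hGineq t hu
        have ht' : 0 < t := ht
        nlinarith [this]
      exact ge_of_tendsto (hGcont.tendsto.mono_left nhdsWithin_le_nhds) hev
    have hG0_nonpos : G 0 ≤ 0 := by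
      have hev : ∀ᶠ t in 𝓝[<] (0:ℝ), G t ≤ 0 := by
        filter_upwards [hunit.filter_mono nhdsWithin_le_nhds, self_mem_nhdsWithin] with t hu ht
        have := hGineq t hu
        have ht' : t < 0 := ht
        nlinarith [this]
      exact le_of_tendsto (hGcont.tendsto.mono_left nhdsWithin_le_nhds) hev
    have hG0 : G 0 = 0 := le_antisymm hG0_nonpos hG0_nonneg
    have hinv0 : invf 0 = 1 := by rw [hinvf]; simp
    have hZ0 : Z 0 = Yt * Aᵀ := by rw [hZ]; simp [hinv0]
    rw [hG] at hG0
    simp only [hZ0, zero_mul, add_zero] at hG0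
    rw [matInner_comm Ey (Yt * Aᵀ)]
    linarith [hG0]
  have key2 : ∀ A : Matrix (Fin r) (Fin r) ℝ,
      matInner (Xtᵀ * Ex - Eyᵀ * Yt) A = 0 := by
    intro A
    have h1 : matInner Ex (Xt * A) = matInner (Xtᵀ * Ex) A := by
      rw [matInner, matInner, Matrix.transpose_mul, Matrix.mul_assoc]
    have h2 : matInner Ey (Yt * Aᵀ) = matInner (Eyᵀ * Yt) A := by
      rw [matInner, matInner, Matrix.transpose_mul, Matrix.transpose_transpose]
      conv_rhs => rw [← Matrix.trace_transpose, Matrix.transpose_mul, Matrix.transpose_mul,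
        Matrix.transpose_transpose, Matrix.trace_mul_comm]
      rw [Matrix.mul_assoc, Matrix.transpose_transpose]
    rw [matInner_sub_left, ← h1, ← h2, key A, sub_self]
  have hD := key2 (Xtᵀ * Ex - Eyᵀ * Yt)
  rw [matInner_self] at hD
  have := frob_sq_zero hD
  rw [sub_eq_zero] at this
  exact this

lemma frob_add_le {m n : ℕ} (A B : Matrix (Fin m) (Fin n) ℝ) :
    frobNorm (A + B) ≤ frobNorm A + frobNorm B := by
  rw [frob_eq_norm, frob_eq_norm, frob_eq_norm, mvec_add]; exact norm_add_le _ _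


lemma cross_nonneg_eq {n₁ n₂ r : ℕ} (Ex Xt : Matrix (Fin n₁) (Fin r) ℝ)
    (Ey Yt : Matrix (Fin n₂) (Fin r) ℝ) (hal : Xtᵀ * Ex = Eyᵀ * Yt) :
    matInner (Ex * Ytᵀ) (Xt * Eyᵀ) = frobNorm (Ytᵀ * Ey) ^ 2 := by
  rw [← matInner_self, matInner, matInner, Matrix.transpose_mul, Matrix.transpose_mul,
    Matrix.transpose_transpose, Matrix.transpose_transpose]
  rw [Matrix.mul_assoc Ey Xtᵀ, ← Matrix.mul_assoc Xtᵀ Ex, hal, Matrix.trace_mul_comm Ey,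
    Matrix.mul_assoc]

set_option maxHeartbeats 2000000 in
lemma scalar_final (a b nn dF ex ey sq cross WN R1 R2 WΔ Wsq σmin : ℝ)
    (hsq : 0 < sq) (hsqs : sq ^ 2 = σmin)
    (hex0 : 0 ≤ ex) (hey0 : 0 ≤ ey) (ha0 : 0 ≤ a) (hb0 : 0 ≤ b) (hnn0 : 0 ≤ nn)
    (hdF0 : 0 ≤ dF) (hexs : ex ≤ sq/100) (heys : ey ≤ sq/100)
    (hnb : nn ≤ ex * ey) (hdFb : dF ≤ a + b + nn)
    (hWΔ : WΔ = Wsq - WN) (hWsq : Wsq = a ^ 2 + 2 * cross + b ^ 2) (hcross0 : 0 ≤ cross)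
    (hWNb : WN ≤ (a + b) * nn)
    (hR1 : -(sq/170 * (ex * dF)) ≤ R1) (hR2 : -(sq/170 * (ey * dF)) ≤ R2) :
    3/4 * (a ^ 2 + b ^ 2) - σmin/7 * (ex ^ 2 + ey ^ 2) ≤ WΔ + R1 + R2 := by
  subst hsqs hWΔ hWsq
  have y0 : sq/170 * (ex * dF) + sq/170 * (ey * dF) ≤
      sq/170 * ((ex + ey) * (a + b + nn)) := by
    have h1 : sq/170 * (ex + ey) * dF ≤ sq/170 * (ex + ey) * (a + b + nn) :=
      mul_le_mul_of_nonneg_left hdFb (by positivity)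
    nlinarith [h1]
  have y1 : (a + b) * nn ≤ (a ^ 2 + b ^ 2)/16 + 8 * (ex * ey) ^ 2 := by
    nlinarith [sq_nonneg (a + b - 16 * nn), sq_nonneg (a - b),
      mul_nonneg (sub_nonneg.mpr hnb) (add_nonneg (mul_nonneg hex0 hey0) hnn0)]
  have y2 : sq/170 * ((ex + ey) * (a + b)) ≤
      (a ^ 2 + b ^ 2)/8 + 8 * (sq/170) ^ 2 * (ex ^ 2 + ey ^ 2) := by
    have h1 : sq/170 * ((ex + ey) * (a + b)) ≤
        (a + b) ^ 2/16 + 4 * (sq/170) ^ 2 * (ex + ey) ^ 2 := by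
      nlinarith [sq_nonneg (a + b - 8 * (sq/170) * (ex + ey))]
    have h2 : (a + b) ^ 2 ≤ 2 * (a ^ 2 + b ^ 2) := by nlinarith [sq_nonneg (a - b)]
    have h3 : (sq/170) ^ 2 * (ex + ey) ^ 2 ≤ 2 * (sq/170) ^ 2 * (ex ^ 2 + ey ^ 2) := by
      nlinarith [sq_nonneg ((sq/170) * (ex - ey))]
    linarith
  have y3 : sq/170 * ((ex + ey) * nn) ≤ sq/170 * ((sq/50) * ((ex ^ 2 + ey ^ 2)/2)) := by
    have h1 : ex + ey ≤ sq/50 := by linarith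
    have h2 : nn ≤ (ex ^ 2 + ey ^ 2)/2 := by nlinarith [sq_nonneg (ex - ey), hnb]
    apply mul_le_mul_of_nonneg_left _ (by positivity : (0:ℝ) ≤ sq/170)
    apply mul_le_mul h1 h2 hnn0 (by positivity)
  have y4 : (ex * ey) ^ 2 ≤ (sq/100) ^ 2 * (ex ^ 2 + ey ^ 2) := by
    have h1 : ex ^ 2 ≤ (sq/100) ^ 2 := by nlinarith [hexs, hex0]
    nlinarith [sq_nonneg ey, mul_le_mul_of_nonneg_right h1 (sq_nonneg ey), sq_nonneg ex]
  linarith [y0, y1, y2, y3, y4, hWNb, hcross0, hR1, hR2, sq_nonneg a, sq_nonneg b,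
    sq_nonneg (sq * ex), sq_nonneg (sq * ey)]


set_option maxHeartbeats 2000000 in
/-- lower bound on `γ₁ + γ₂`: there is an absolute constant
`c₀ > 0` such that if `Z̃ = [X̃; Ỹ]` is aligned with `Z⋆`, the error is at most
`c₀²σ_min/κ³` in squared Frobenius norm, and `Λ` is invertible and close to the
identity, then
`⟨Ẽ_x, (X̃Ỹᵀ−M⋆)ỸΛ⟩ + ⟨Ẽ_y, (X̃Ỹᵀ−M⋆)ᵀX̃Λ⁻¹⟩ ≥ ¾(‖ỸẼ_xᵀ‖_F² + ‖X̃Ẽ_yᵀ‖_F²) − (σ_min/7)(‖Ẽ_x‖_F² + ‖Ẽ_y‖_F²)`. -/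
theorem gamma_lower_bound :
    ∃ c₀ : ℝ, 0 < c₀ ∧
      ∀ (n₁ n₂ r : ℕ)
        (Ustar : Matrix (Fin n₁) (Fin r) ℝ) (Vstar : Matrix (Fin n₂) (Fin r) ℝ)
        (d : Fin r → ℝ), (∀ i, 0 < d i) →
        Ustarᵀ * Ustar = 1 → Vstarᵀ * Vstar = 1 →
        ∀ (Mstar : Matrix (Fin n₁) (Fin n₂) ℝ),
          Mstar = Ustar * Matrix.diagonal d * Vstarᵀ →
        ∀ (Xstar : Matrix (Fin n₁) (Fin r) ℝ) (Ystar : Matrix (Fin n₂) (Fin r) ℝ),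
          Xstar = Ustar * Matrix.diagonal (fun i => Real.sqrt (d i)) →
          Ystar = Vstar * Matrix.diagonal (fun i => Real.sqrt (d i)) →
        ∀ (σmax σmin : ℝ),
          IsGreatest (Set.range d) σmax → IsLeast (Set.range d) σmin →
        ∀ (Xt : Matrix (Fin n₁) (Fin r) ℝ) (Yt : Matrix (Fin n₂) (Fin r) ℝ),
          -- Z̃ is aligned with Z⋆
          (∀ P : Matrix (Fin r) (Fin r) ℝ, IsUnit P →
            (frobNorm (Xt - Xstar)) ^ 2 + (frobNorm (Yt - Ystar)) ^ 2 ≤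
              (frobNorm (Xt * P - Xstar)) ^ 2 + (frobNorm (Yt * (P⁻¹)ᵀ - Ystar)) ^ 2) →
          -- small aligned error
          (frobNorm (Xt - Xstar)) ^ 2 + (frobNorm (Yt - Ystar)) ^ 2 ≤
            c₀ ^ 2 * σmin / (σmax / σmin) ^ 3 →
        ∀ (Λ : Matrix (Fin r) (Fin r) ℝ), IsUnit Λ →
          specNorm (Λ - 1) ≤ 1 / (180 * Real.sqrt (σmax / σmin)) →
          specNorm (Λ⁻¹ - 1) ≤ 1 / (180 * Real.sqrt (σmax / σmin)) →
          matInner (Xt - Xstar) ((Xt * Ytᵀ - Mstar) * (Yt * Λ)) +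
              matInner (Yt - Ystar) ((Xt * Ytᵀ - Mstar)ᵀ * (Xt * Λ⁻¹)) ≥
            (3 / 4) * ((frobNorm (Yt * (Xt - Xstar)ᵀ)) ^ 2 +
                (frobNorm (Xt * (Yt - Ystar)ᵀ)) ^ 2) -
              (σmin / 7) * ((frobNorm (Xt - Xstar)) ^ 2 + (frobNorm (Yt - Ystar)) ^ 2) := by
  refine ⟨1/100, by norm_num, ?_⟩
  intro n₁ n₂ r Ustar Vstar d hd hU hV Mstar hM Xstar Ystar hXs hYs σmax σmin hmax hmin
    Xt Yt halign heps Λ hΛ hS hT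
  -- basic scalar facts
  obtain ⟨i0, hi0⟩ := hmin.1
  have hd0 : ∀ i, 0 ≤ d i := fun i => (hd i).le
  have hσmin_pos : 0 < σmin := hi0 ▸ hd i0
  have hdle : ∀ i, d i ≤ σmax := fun i => hmax.2 ⟨i, rfl⟩
  have hminmax : σmin ≤ σmax := hi0 ▸ hdle i0
  have hσmax_pos : 0 < σmax := lt_of_lt_of_le hσmin_pos hminmax
  set sq := Real.sqrt σmin with hsq
  set sx := Real.sqrt σmax with hsx
  have hsq_pos : 0 < sq := Real.sqrt_pos.mpr hσmin_pos
  have hsx_pos : 0 < sx := Real.sqrt_pos.mpr hσmax_pos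
  have hsqsx : sq ≤ sx := Real.sqrt_le_sqrt hminmax
  have hκ1 : (1:ℝ) ≤ σmax / σmin := (one_le_div hσmin_pos).mpr hminmax
  have hrκ : Real.sqrt (σmax/σmin) = sx / sq := by
    rw [hsx, hsq, ← Real.sqrt_div hσmax_pos.le]
  have hrκ1 : (1:ℝ) ≤ Real.sqrt (σmax/σmin) := by
    rw [show (1:ℝ) = Real.sqrt 1 by simp]
    exact Real.sqrt_le_sqrt hκ1
  set s := 1 / (180 * Real.sqrt (σmax / σmin)) with hs
  have hs_pos : 0 < s := by
    rw [hs]; positivity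
  have hssx : s * sx = sq / 180 := by
    rw [hs, hrκ]
    field_simp
  have hs_le : s ≤ 1/180 := by
    rw [hs]
    rw [div_le_div_iff₀ (by positivity) (by norm_num)]
    nlinarith [hrκ1]
  -- matrices
  set Ex := Xt - Xstar with hEx
  set Ey := Yt - Ystar with hEy
  set Δ := Xt * Ytᵀ - Mstar with hΔ
  set W := Ex * Ytᵀ + Xt * Eyᵀ with hW
  set N := Ex * Eyᵀ with hN
  set ex := frobNorm Ex with hex
  set ey := frobNorm Ey with hey
  set a := frobNorm (Yt * Exᵀ) with ha
  set b := frobNorm (Xt * Eyᵀ) with hb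
  set nn := frobNorm N with hnn
  set dF := frobNorm Δ with hdF
  have hex0 : 0 ≤ ex := frob_nonneg _
  have hey0 : 0 ≤ ey := frob_nonneg _
  have ha0 : 0 ≤ a := frob_nonneg _
  have hb0 : 0 ≤ b := frob_nonneg _
  have hnn0 : 0 ≤ nn := frob_nonneg _
  have hdF0 : 0 ≤ dF := frob_nonneg _
  -- error smallness
  have hε2 : ex^2 + ey^2 ≤ (sq/100)^2 := by
    have h1 : (1/100:ℝ)^2 * σmin / (σmax/σmin)^3 ≤ (1/100)^2 * σmin := by
      apply div_le_self (by positivity)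
      exact one_le_pow₀ hκ1
    have h2 : (sq/100)^2 = (1/100:ℝ)^2 * σmin := by
      rw [div_pow, hsq, Real.sq_sqrt hσmin_pos.le]; ring
    rw [h2]; exact le_trans heps h1
  have hexs : ex ≤ sq/100 := by
    apply sqle hex0 (by positivity)
    nlinarith [sq_nonneg ey]
  have heys : ey ≤ sq/100 := by
    apply sqle hey0 (by positivity)
    nlinarith [sq_nonneg ex]
  -- Mstar factorization
  have hMs : Mstar = Xstar * Ystarᵀ := by
    have hdd : Matrix.diagonal (fun i => Real.sqrt (d i)) *
        Matrix.diagonal (fun i => Real.sqrt (d i)) = Matrix.diagonal d := by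
      rw [Matrix.diagonal_mul_diagonal]
      have h : (fun i => Real.sqrt (d i) * Real.sqrt (d i)) = d :=
        funext fun i => Real.mul_self_sqrt (hd0 i)
      rw [h]
    rw [hM, hXs, hYs, Matrix.transpose_mul, Matrix.diagonal_transpose]
    conv_rhs => rw [← Matrix.mul_assoc, Matrix.mul_assoc Ustar, hdd]
  -- delta decomposition
  have hΔWN : Δ = W - N := by
    rw [hΔ, hW, hN, hEx, hEy, hMs, Matrix.transpose_sub, Matrix.sub_mul, Matrix.sub_mul,
      Matrix.mul_sub, Matrix.mul_sub]
    abel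
  -- spectral bounds
  have hXsp : specNorm Xstar ≤ sx := hXs ▸ spec_star_le Ustar hU d σmax hd0 hdle hσmax_pos.le
  have hXspT : specNorm Xstarᵀ ≤ sx := hXs ▸ spec_starT_le Ustar hU d σmax hd0 hdle hσmax_pos.le
  have hYsp : specNorm Ystar ≤ sx := hYs ▸ spec_star_le Vstar hV d σmax hd0 hdle hσmax_pos.le
  have hYspT : specNorm Ystarᵀ ≤ sx := hYs ▸ spec_starT_le Vstar hV d σmax hd0 hdle hσmax_pos.le
  have hXtdecomp : Xt = Xstar + Ex := by rw [hEx]; abel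
  have hYtdecomp : Yt = Ystar + Ey := by rw [hEy]; abel
  have hXt_sp : specNorm Xt ≤ sx + ex := by
    calc specNorm Xt = specNorm (Xstar + Ex) := by rw [← hXtdecomp]
    _ ≤ specNorm Xstar + specNorm Ex := specNorm_add_le _ _
    _ ≤ sx + ex := add_le_add hXsp (spec_le_frob _)
  have hYt_sp : specNorm Yt ≤ sx + ey := by
    calc specNorm Yt = specNorm (Ystar + Ey) := by rw [← hYtdecomp]
    _ ≤ specNorm Ystar + specNorm Ey := specNorm_add_le _ _
    _ ≤ sx + ey := add_le_add hYsp (spec_le_frob _)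
  have hXtT_sp : specNorm Xtᵀ ≤ sx + ex := by
    have : Xtᵀ = Xstarᵀ + Exᵀ := by rw [hXtdecomp, Matrix.transpose_add]
    calc specNorm Xtᵀ = specNorm (Xstarᵀ + Exᵀ) := by rw [← this]
    _ ≤ specNorm Xstarᵀ + specNorm Exᵀ := specNorm_add_le _ _
    _ ≤ sx + ex := by
        refine add_le_add hXspT (le_trans (spec_le_frob _) ?_)
        rw [frob_transpose]
  have hYtT_sp : specNorm Ytᵀ ≤ sx + ey := by
    have : Ytᵀ = Ystarᵀ + Eyᵀ := by rw [hYtdecomp, Matrix.transpose_add]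
    calc specNorm Ytᵀ = specNorm (Ystarᵀ + Eyᵀ) := by rw [← this]
    _ ≤ specNorm Ystarᵀ + specNorm Eyᵀ := specNorm_add_le _ _
    _ ≤ sx + ey := by
        refine add_le_add hYspT (le_trans (spec_le_frob _) ?_)
        rw [frob_transpose]
  -- alignment first-order condition
  have hal : Xtᵀ * Ex = Eyᵀ * Yt := align_first_order Xt Xstar Yt Ystar halign
  have hcross0 : 0 ≤ matInner (Ex * Ytᵀ) (Xt * Eyᵀ) := by
    rw [cross_nonneg_eq Ex Xt Ey Yt hal]
    positivity
  -- decomposition of the goal quantity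
  have hgoal1 : matInner Ex (Δ * (Yt * Λ)) =
      matInner (Ex * Ytᵀ) Δ + matInner (Ex * (Λ - 1)ᵀ) (Δ * Yt) := by
    rw [← Matrix.mul_assoc, matInner_shift Ex (Δ * Yt) Λ]
    have h : Ex * Λᵀ = Ex + Ex * (Λ - 1)ᵀ := by
      rw [Matrix.transpose_sub, Matrix.transpose_one, Matrix.mul_sub, Matrix.mul_one]; abel
    rw [h, matInner_add_left, matInner_shift Ex Δ Yt]
  have hgoal2 : matInner Ey (Δᵀ * (Xt * Λ⁻¹)) =
      matInner (Xt * Eyᵀ) Δ + matInner (Ey * (Λ⁻¹ - 1)ᵀ) (Δᵀ * Xt) := by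
    rw [← Matrix.mul_assoc, matInner_shift Ey (Δᵀ * Xt) Λ⁻¹]
    have h : Ey * (Λ⁻¹)ᵀ = Ey + Ey * (Λ⁻¹ - 1)ᵀ := by
      rw [Matrix.transpose_sub, Matrix.transpose_one, Matrix.mul_sub, Matrix.mul_one]; abel
    rw [h, matInner_add_left, matInner_shift Ey Δᵀ Xt]
    congr 1
    rw [← matInner_transpose (Xt * Eyᵀ) Δ, Matrix.transpose_mul, Matrix.transpose_transpose]
  -- main term
  have hWΔ : matInner W Δ = frobNorm W ^ 2 - matInner W N := by
    rw [hΔWN, matInner_sub_right, matInner_self]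
  have haT : frobNorm (Ex * Ytᵀ) = a := by
    rw [ha, ← frob_transpose (Yt * Exᵀ), Matrix.transpose_mul, Matrix.transpose_transpose]
  have hWsq : frobNorm W ^ 2 =
      a ^ 2 + 2 * matInner (Ex * Ytᵀ) (Xt * Eyᵀ) + b ^ 2 := by
    have h := frob_expand (Ex * Ytᵀ) (Xt * Eyᵀ) 1
    rw [one_smul] at h
    rw [hW, h, haT, hb]
    ring
  -- norm bounds
  have hnb : nn ≤ ex * ey := by
    rw [hnn, hN]
    calc frobNorm (Ex * Eyᵀ) ≤ specNorm Ex * frobNorm Eyᵀ := frob_mul_le _ _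
    _ ≤ ex * ey := by
        rw [frob_transpose]
        exact mul_le_mul_of_nonneg_right (spec_le_frob _) hey0
  have hWb : frobNorm W ≤ a + b := by
    rw [hW]
    calc frobNorm (Ex * Ytᵀ + Xt * Eyᵀ) ≤ frobNorm (Ex * Ytᵀ) + frobNorm (Xt * Eyᵀ) :=
      frob_add_le _ _
    _ = a + b := by rw [haT, hb]
  have hdFb : dF ≤ a + b + nn := by
    rw [hdF, hΔWN]
    calc frobNorm (W - N) ≤ frobNorm W + frobNorm N := frob_sub_le _ _
    _ ≤ a + b + nn := by rw [hnn]; linarith [hWb]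
  have hWNb : matInner W N ≤ (a + b) * nn := by
    calc matInner W N ≤ |matInner W N| := le_abs_self _
    _ ≤ frobNorm W * frobNorm N := abs_matInner_le _ _
    _ ≤ (a + b) * nn := by
        rw [hnn]
        exact mul_le_mul_of_nonneg_right hWb (frob_nonneg _)
  -- remainder bounds
  have hsK1 : s * (sx + ey) ≤ sq / 170 := by
    have h1 : s * ey ≤ (1/180) * (sq/100) :=
      mul_le_mul hs_le heys hey0 (by norm_num)
    have h2 : s * (sx + ey) = s * sx + s * ey := by ring
    rw [h2, hssx]
    linarith [hsq_pos.le]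
  have hsK2 : s * (sx + ex) ≤ sq / 170 := by
    have h1 : s * ex ≤ (1/180) * (sq/100) :=
      mul_le_mul hs_le hexs hex0 (by norm_num)
    have h2 : s * (sx + ex) = s * sx + s * ex := by ring
    rw [h2, hssx]
    linarith [hsq_pos.le]
  have hR1 : -(sq/170 * (ex * dF)) ≤ matInner (Ex * (Λ - 1)ᵀ) (Δ * Yt) := by
    have hfrob1 : frobNorm (Ex * (Λ - 1)ᵀ) ≤ specNorm (Λ - 1) * ex := by
      rw [← frob_transpose (Ex * (Λ - 1)ᵀ), Matrix.transpose_mul, Matrix.transpose_transpose]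
      calc frobNorm ((Λ - 1) * Exᵀ) ≤ specNorm (Λ - 1) * frobNorm Exᵀ := frob_mul_le _ _
      _ = specNorm (Λ - 1) * ex := by rw [frob_transpose]
    have hfrob2 : frobNorm (Δ * Yt) ≤ (sx + ey) * dF := by
      rw [← frob_transpose (Δ * Yt), Matrix.transpose_mul]
      calc frobNorm (Ytᵀ * Δᵀ) ≤ specNorm Ytᵀ * frobNorm Δᵀ := frob_mul_le _ _
      _ ≤ (sx + ey) * dF := by
          rw [frob_transpose]
          exact mul_le_mul_of_nonneg_right hYtT_sp hdF0
    have habs : |matInner (Ex * (Λ - 1)ᵀ) (Δ * Yt)| ≤ (specNorm (Λ - 1) * ex) * ((sx + ey) * dF) := by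
      calc |matInner (Ex * (Λ - 1)ᵀ) (Δ * Yt)| ≤ frobNorm (Ex * (Λ - 1)ᵀ) * frobNorm (Δ * Yt) :=
        abs_matInner_le _ _
      _ ≤ (specNorm (Λ - 1) * ex) * ((sx + ey) * dF) := by
          exact mul_le_mul hfrob1 hfrob2 (frob_nonneg _) (mul_nonneg (specNorm_nonneg _) hex0)
    have hb2 : (specNorm (Λ - 1) * ex) * ((sx + ey) * dF) ≤ sq/170 * (ex * dF) := by
      have e1 : (specNorm (Λ - 1) * ex) * ((sx + ey) * dF) =
          (specNorm (Λ - 1) * (sx + ey)) * (ex * dF) := by ring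
      have e2 : specNorm (Λ - 1) * (sx + ey) ≤ s * (sx + ey) := by
        apply mul_le_mul_of_nonneg_right hS
        positivity
      rw [e1]
      apply mul_le_mul (le_trans e2 hsK1) le_rfl (mul_nonneg hex0 hdF0)
      positivity
    have := neg_abs_le (matInner (Ex * (Λ - 1)ᵀ) (Δ * Yt))
    linarith [habs, hb2]
  have hR2 : -(sq/170 * (ey * dF)) ≤ matInner (Ey * (Λ⁻¹ - 1)ᵀ) (Δᵀ * Xt) := by
    have hfrob1 : frobNorm (Ey * (Λ⁻¹ - 1)ᵀ) ≤ specNorm (Λ⁻¹ - 1) * ey := by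
      rw [← frob_transpose (Ey * (Λ⁻¹ - 1)ᵀ), Matrix.transpose_mul, Matrix.transpose_transpose]
      calc frobNorm ((Λ⁻¹ - 1) * Eyᵀ) ≤ specNorm (Λ⁻¹ - 1) * frobNorm Eyᵀ := frob_mul_le _ _
      _ = specNorm (Λ⁻¹ - 1) * ey := by rw [frob_transpose]
    have hfrob2 : frobNorm (Δᵀ * Xt) ≤ (sx + ex) * dF := by
      rw [← frob_transpose (Δᵀ * Xt), Matrix.transpose_mul, Matrix.transpose_transpose]
      calc frobNorm (Xtᵀ * Δ) ≤ specNorm Xtᵀ * frobNorm Δ := frob_mul_le _ _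
      _ ≤ (sx + ex) * dF := mul_le_mul_of_nonneg_right hXtT_sp hdF0
    have habs : |matInner (Ey * (Λ⁻¹ - 1)ᵀ) (Δᵀ * Xt)| ≤
        (specNorm (Λ⁻¹ - 1) * ey) * ((sx + ex) * dF) := by
      calc |matInner (Ey * (Λ⁻¹ - 1)ᵀ) (Δᵀ * Xt)| ≤
          frobNorm (Ey * (Λ⁻¹ - 1)ᵀ) * frobNorm (Δᵀ * Xt) := abs_matInner_le _ _
      _ ≤ (specNorm (Λ⁻¹ - 1) * ey) * ((sx + ex) * dF) := by
          exact mul_le_mul hfrob1 hfrob2 (frob_nonneg _) (mul_nonneg (specNorm_nonneg _) hey0)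
    have hb2 : (specNorm (Λ⁻¹ - 1) * ey) * ((sx + ex) * dF) ≤ sq/170 * (ey * dF) := by
      have e1 : (specNorm (Λ⁻¹ - 1) * ey) * ((sx + ex) * dF) =
          (specNorm (Λ⁻¹ - 1) * (sx + ex)) * (ey * dF) := by ring
      have e2 : specNorm (Λ⁻¹ - 1) * (sx + ex) ≤ s * (sx + ex) := by
        apply mul_le_mul_of_nonneg_right hT
        positivity
      rw [e1]
      apply mul_le_mul (le_trans e2 hsK2) le_rfl (mul_nonneg hey0 hdF0)
      positivity
    have := neg_abs_le (matInner (Ey * (Λ⁻¹ - 1)ᵀ) (Δᵀ * Xt))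
    linarith [habs, hb2]
  -- put the goal together
  have hsum : matInner Ex (Δ * (Yt * Λ)) + matInner Ey (Δᵀ * (Xt * Λ⁻¹)) =
      matInner W Δ + matInner (Ex * (Λ - 1)ᵀ) (Δ * Yt) +
        matInner (Ey * (Λ⁻¹ - 1)ᵀ) (Δᵀ * Xt) := by
    rw [hgoal1, hgoal2, hW, matInner_add_left]
    ring
  rw [ge_iff_le, hsum]
  -- scalar endgame
  have hsqs : sq ^ 2 = σmin := Real.sq_sqrt hσmin_pos.le
  have happl := scalar_final a b nn dF ex ey sq (matInner (Ex * Ytᵀ) (Xt * Eyᵀ))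
    (matInner W N) (matInner (Ex * (Λ - 1)ᵀ) (Δ * Yt)) (matInner (Ey * (Λ⁻¹ - 1)ᵀ) (Δᵀ * Xt))
    (matInner W Δ) (frobNorm W ^ 2) σmin hsq_pos hsqs hex0 hey0 ha0 hb0 hnn0 hdF0
    hexs heys hnb hdFb hWΔ hWsq hcross0 hWNb hR1 hR2
  linarith [happl]
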